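/- Let τ be a rearrangement of dyadic intervals such that for some constant C ≥ 1, ⟦τ(B)⟧ ≤ C ⟦B⟧² for every collection B of dyadic intervals. Then ⟦τ(B)⟧ ≤ 16C ⟦B⟧ for every collection B. (Use the decomposition of B into at most 4⟦B⟧ subcollections each of Carleson constant ≤ 4.) -/

import Mathlib

open MeasureTheory

/-- A dyadic interval `[k/2^n, (k+1)/2^n)` of `[0,1)`. -/
structure DI where
  n : ℕ
  k : ℕ
  hk : k < 2 ^ n

namespace DI

/-- The underlying set of a dyadic interval. -/
def carrier (I : DI) : Set ℝ := Set.Ico ((I.k : ℝ) / 2 ^ I.n) ((I.k + 1 : ℝ) / 2 ^ I.n)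

/-- The length `|I| = 2^{-n}` of a dyadic interval. -/
noncomputable def len (I : DI) : ENNReal := ENNReal.ofReal ((2 : ℝ)⁻¹ ^ I.n)

end DI

/-- The Carleson sum `∑_{I ∈ L, I ⊆ J} |I|`. -/
noncomputable def carlesonSum (L : Set DI) (J : DI) : ENNReal :=
  ∑' I : {I : DI // I ∈ L ∧ I.carrier ⊆ J.carrier}, I.1.len

/-- `L` satisfies the `M`-Carleson condition. -/
def CarlesonLE (L : Set DI) (M : ENNReal) : Prop :=
  ∀ J : DI, carlesonSum L J ≤ M * J.len

/-- The Carleson constant `⟦L⟧ = sup_J (1/|J|) ∑_{I ∈ L, I ⊆ J} |I|`. -/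
noncomputable def carlesonConst (L : Set DI) : ENNReal :=
  ⨆ J : DI, carlesonSum L J / J.len

/-- The square of the dyadic BMO norm of `x = ∑ x_I h_I`,
`‖x‖² = sup_J (1/|J|) ∑_{I ⊆ J} x_I² |I|`, in terms of the Haar coefficients. -/
noncomputable def bmoSq (x : DI → ℝ) : ENNReal :=
  ⨆ J : DI, (∑' I : {I : DI // I.carrier ⊆ J.carrier},
      ENNReal.ofReal ((x I.1) ^ 2) * I.1.len) / J.len

/-- `|L*|`: the Lebesgue measure of the set covered by the collection `L`. -/
noncomputable def covMeas (L : Set DI) : ENNReal := volume (⋃ I ∈ L, I.carrier)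

/-- `y` is the coefficient function of `Tx` where `T h_I = h_{τ(I)}` and `x` has
coefficients `x_I`. -/
def HaarCompat (τ : DI → DI) (x y : DI → ℝ) : Prop :=
  (∀ I, y (τ I) = x I) ∧ ∀ J, J ∉ Set.range τ → y J = 0

/-- The maximal elements of a collection of dyadic intervals, under inclusion. -/
def maxSet (S : Set DI) : Set DI :=
  {I | I ∈ S ∧ ∀ K ∈ S, I.carrier ⊆ K.carrier → I = K}

namespace DI
lemma ext' {I K : DI} (hn : I.n = K.n) (hk : I.k = K.k) : I = K := by
  cases I; cases K; simp_all
lemma two_pow_pos (n : ℕ) : (0:ℝ) < 2 ^ n := by positivity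
lemma mem_carrier_iff {I : DI} {y : ℝ} : y ∈ I.carrier ↔ ⌊y * 2 ^ I.n⌋ = (I.k : ℤ) := by
  have h2 : (0:ℝ) < 2 ^ I.n := two_pow_pos I.n
  rw [carrier, Set.mem_Ico, Int.floor_eq_iff]
  push_cast
  constructor
  · rintro ⟨h1, h2'⟩
    exact ⟨(div_le_iff₀ h2).1 h1, (lt_div_iff₀ h2).1 h2'⟩
  · rintro ⟨h1, h2'⟩
    exact ⟨(div_le_iff₀ h2).2 h1, (lt_div_iff₀ h2).2 h2'⟩

lemma floor_const_on_carrier {I K : DI} (hn : K.n ≤ I.n) {z : ℝ} (hz : z ∈ I.carrier) :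
    ⌊z * 2 ^ K.n⌋ = ((I.k / 2 ^ (I.n - K.n) : ℕ) : ℤ) := by
  set d := I.n - K.n with hd
  set q : ℕ := 2 ^ d with hq
  have hqpos : 0 < q := Nat.pow_pos (by norm_num)
  set c : ℕ := I.k / q with hc
  have hpow : (2:ℝ) ^ I.n = 2 ^ K.n * q := by
    rw [hq]
    push_cast
    rw [← pow_add]
    congr 1
    omega
  have h2K : (0:ℝ) < 2 ^ K.n := two_pow_pos K.n
  have hqR : (0:ℝ) < (q:ℝ) := by exact_mod_cast hqpos
  obtain ⟨hz1, hz2⟩ := hz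
  have hz1' : (I.k : ℝ) ≤ z * 2 ^ I.n := (div_le_iff₀ (two_pow_pos I.n)).1 hz1
  have hz2' : z * 2 ^ I.n < (I.k : ℝ) + 1 := by
    have := (lt_div_iff₀ (two_pow_pos I.n)).1 hz2
    linarith
  rw [Int.floor_eq_iff]
  push_cast
  constructor
  · -- c ≤ z * 2^K.n
    have h1 : (c : ℝ) * q ≤ I.k := by exact_mod_cast Nat.div_mul_le_self I.k q
    have : z * 2 ^ K.n * q = z * 2 ^ I.n := by rw [hpow]; ring
    nlinarith
  · -- z * 2^K.n < c + 1
    have h1 : (I.k : ℝ) + 1 ≤ ((c : ℝ) + 1) * q := by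
      have hlt : I.k < (c + 1) * q := by
        rw [hc, add_mul, one_mul]
        exact Nat.lt_div_mul_add hqpos
      exact_mod_cast hlt
    have h2 : z * 2 ^ K.n * q = z * 2 ^ I.n := by rw [hpow]; ring
    nlinarith

lemma carrier_subset_of_inter {I K : DI} (hn : K.n ≤ I.n) {x : ℝ} (hxI : x ∈ I.carrier)
    (hxK : x ∈ K.carrier) : I.carrier ⊆ K.carrier := by
  intro y hy
  rw [mem_carrier_iff]
  rw [floor_const_on_carrier hn hy]
  rw [← floor_const_on_carrier hn hxI]
  exact mem_carrier_iff.1 hxK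
end DI

namespace DI
instance : Countable DI := by
  have : Function.Injective (fun I : DI => (I.n, I.k)) := by
    intro I K h
    simp only [Prod.mk.injEq] at h
    exact ext' h.1 h.2
  exact this.countable

instance : Inhabited DI := ⟨⟨0, 0, by norm_num⟩⟩

lemma measurable_carrier (I : DI) : MeasurableSet I.carrier := measurableSet_Ico
end DI

open MeasureTheory
section
variable {I K : DI}
namespace DI
lemma carrier_nonempty (I : DI) : I.carrier.Nonempty := by
  refine Set.nonempty_Ico.2 ?_
  have := DI.two_pow_pos I.n
  apply div_lt_div_of_pos_right ?_ this
  linarith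

lemma volume_carrier (I : DI) : volume I.carrier = I.len := by
  rw [carrier, Real.volume_Ico, len]
  congr 1
  have h2 : (0:ℝ) < 2 ^ I.n := two_pow_pos I.n
  rw [inv_pow]
  field_simp
  ring

lemma len_ne_zero (I : DI) : I.len ≠ 0 := by
  simp only [len, ne_eq, ENNReal.ofReal_eq_zero, not_le]
  positivity

lemma len_ne_top (I : DI) : I.len ≠ ⊤ := ENNReal.ofReal_ne_top

lemma eq_of_same_n (hn : I.n = K.n) {x : ℝ} (hI : x ∈ I.carrier)
    (hK : x ∈ K.carrier) : I = K := by
  rw [mem_carrier_iff] at hI hK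
  rw [hn] at hI
  apply ext' hn
  have : (I.k : ℤ) = K.k := by rw [← hI, ← hK]
  exact_mod_cast this

lemma n_le_of_subset (h : I.carrier ⊆ K.carrier) : K.n ≤ I.n := by
  by_contra hc
  push_neg at hc
  obtain ⟨x, hx⟩ := carrier_nonempty I
  have hxK : x ∈ K.carrier := h hx
  have h2 : K.carrier ⊆ I.carrier := carrier_subset_of_inter (le_of_lt hc) hxK hx
  -- so the carriers are equal, but lengths differ
  have hvol : volume I.carrier ≤ volume K.carrier := measure_mono h
  rw [volume_carrier, volume_carrier, len, len] at hvol
  have := ENNReal.ofReal_le_ofReal_iff (by positivity : (0:ℝ) ≤ (2:ℝ)⁻¹ ^ K.n) |>.1 hvol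
  have h3 : ((2:ℝ)⁻¹) ^ K.n < (2:ℝ)⁻¹ ^ I.n := by
    apply pow_lt_pow_right_of_lt_one₀ (by norm_num) (by norm_num) hc
  linarith

lemma carrier_antisymm (h1 : I.carrier ⊆ K.carrier) (h2 : K.carrier ⊆ I.carrier) : I = K := by
  obtain ⟨x, hx⟩ := carrier_nonempty I
  exact eq_of_same_n (le_antisymm (n_le_of_subset h2) (n_le_of_subset h1)) hx (h1 hx)

lemma comparable {x : ℝ} (hI : x ∈ I.carrier) (hK : x ∈ K.carrier) :
    I.carrier ⊆ K.carrier ∨ K.carrier ⊆ I.carrier := by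
  rcases le_total K.n I.n with h | h
  · exact Or.inl (carrier_subset_of_inter h hI hK)
  · exact Or.inr (carrier_subset_of_inter h hK hI)

/-- The set of intervals (weakly) containing `I` is finite. -/
lemma finite_anc (I : DI) : {K : DI | I.carrier ⊆ K.carrier}.Finite := by
  obtain ⟨x, hx⟩ := carrier_nonempty I
  have : Set.InjOn (fun K : DI => K.n) {K : DI | I.carrier ⊆ K.carrier} := by
    intro K1 h1 K2 h2 hnn
    exact eq_of_same_n hnn (h1 hx) (h2 hx)
  apply Set.Finite.of_finite_image ?_ this
  apply Set.Finite.subset (Set.finite_Iic I.n)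
  rintro m ⟨K, hK, rfl⟩
  exact n_le_of_subset hK
end DI
end

namespace DI
variable {B : Set DI} {I K : DI}

def strictAnc (B : Set DI) (I : DI) : Set DI := {K | K ∈ B ∧ I.carrier ⊆ K.carrier ∧ K ≠ I}

lemma strictAnc_finite (B : Set DI) (I : DI) : (strictAnc B I).Finite :=
  (finite_anc I).subset fun K hK => hK.2.1

noncomputable def depth (B : Set DI) (I : DI) : ℕ := (strictAnc B I).ncard

lemma depth_lt (hK : K ∈ B) (hsub : I.carrier ⊆ K.carrier) (hne : I ≠ K) :
    depth B K < depth B I := by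
  have hsub2 : insert K (strictAnc B K) ⊆ strictAnc B I := by
    rintro L (rfl | hL)
    · exact ⟨hK, hsub, fun h => hne h.symm⟩
    · refine ⟨hL.1, hsub.trans hL.2.1, ?_⟩
      rintro rfl
      exact hne (carrier_antisymm hsub hL.2.1)
  have h1 : (insert K (strictAnc B K)).ncard ≤ (strictAnc B I).ncard :=
    Set.ncard_le_ncard hsub2 (strictAnc_finite B I)
  rw [Set.ncard_insert_of_notMem (fun h => h.2.2 rfl) (strictAnc_finite B K)] at h1
  simp only [depth]
  omega

lemma depth_le (hK : K ∈ B) (hsub : I.carrier ⊆ K.carrier) : depth B K ≤ depth B I := by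
  by_cases hne : I = K
  · subst hne; rfl
  · exact (depth_lt hK hsub hne).le

lemma exists_parent (hd : depth B I ≠ 0) :
    ∃ P ∈ strictAnc B I, (∀ L ∈ strictAnc B I, P.carrier ⊆ L.carrier) ∧
      depth B I = depth B P + 1 := by
  have hfin := strictAnc_finite B I
  have hne : (strictAnc B I).Nonempty := Set.nonempty_of_ncard_ne_zero hd
  obtain ⟨P, hPs, hmax⟩ := Set.exists_max_image _ (fun K => K.n) hfin hne
  obtain ⟨x, hx⟩ := carrier_nonempty I
  have hmin : ∀ L ∈ strictAnc B I, P.carrier ⊆ L.carrier := by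
    intro L hL
    rcases comparable (hPs.2.1 hx) (hL.2.1 hx) with h | h
    · exact h
    · have : L = P := eq_of_same_n (le_antisymm (hmax L hL) (n_le_of_subset h)) (hL.2.1 hx)
        (hPs.2.1 hx)
      subst this; rfl
  refine ⟨P, hPs, hmin, ?_⟩
  have hset : strictAnc B I = insert P (strictAnc B P) := by
    apply Set.Subset.antisymm
    · intro L hL
      by_cases hLP : L = P
      · exact hLP ▸ Set.mem_insert _ _
      · exact Set.mem_insert_of_mem _ ⟨hL.1, hmin L hL, hLP⟩
    · rintro L (rfl | hL)
      · exact hPs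
      · refine ⟨hL.1, (hPs.2.1).trans hL.2.1, ?_⟩
        rintro rfl
        exact hPs.2.2 (carrier_antisymm hPs.2.1 hL.2.1).symm
  rw [depth, hset, Set.ncard_insert_of_notMem (fun h => h.2.2 rfl) (strictAnc_finite B P)]
  rfl

end DI

noncomputable def setsum (S : Set DI) : ENNReal := ∑' I : S, DI.len I.1

lemma setsum_eq_indicator (S : Set DI) : setsum S = ∑' I : DI, S.indicator DI.len I :=
  tsum_subtype S DI.len

lemma setsum_mono {S T : Set DI} (h : S ⊆ T) : setsum S ≤ setsum T := by
  rw [setsum_eq_indicator, setsum_eq_indicator]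
  exact Summable.tsum_le_tsum (fun I => Set.indicator_le_indicator_of_subset h (fun _ => zero_le) I)
    ENNReal.summable ENNReal.summable

lemma setsum_partition {β : Type} (S : Set DI) (c : DI → β) :
    setsum S = ∑' b : β, setsum {I | I ∈ S ∧ c I = b} := by
  have key : ∀ I : DI, S.indicator DI.len I
      = ∑' b : β, {I | I ∈ S ∧ c I = b}.indicator DI.len I := by
    intro I
    by_cases hI : I ∈ S
    · rw [tsum_eq_single (c I) (fun b hb => Set.indicator_of_notMem (fun hm => hb hm.2.symm) _),
        Set.indicator_of_mem hI, Set.indicator_of_mem (by exact ⟨hI, rfl⟩)]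
    · rw [Set.indicator_of_notMem hI]
      symm
      apply ENNReal.tsum_eq_zero.2
      intro b
      exact Set.indicator_of_notMem (fun hm => hI hm.1) _
  rw [setsum_eq_indicator]
  simp_rw [key]
  rw [ENNReal.tsum_comm]
  exact tsum_congr fun b => (setsum_eq_indicator _).symm

lemma setsum_disjoint (S : Set DI) (hd : S.Pairwise (Function.onFun Disjoint DI.carrier)) :
    setsum S = volume (⋃ I ∈ S, I.carrier) := by
  rw [measure_biUnion S.to_countable hd (fun I _ => DI.measurable_carrier I)]
  simp_rw [DI.volume_carrier]
  rfl

lemma carlesonSum_eq (L : Set DI) (J : DI) :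
    carlesonSum L J = setsum {I | I ∈ L ∧ I.carrier ⊆ J.carrier} := rfl

section Core
open DI
variable (B : Set DI) (K : DI)

/-- intervals of `B` below `K` at depth `t`. -/
def level (t : ℕ) : Set DI := {I | I ∈ B ∧ I.carrier ⊆ K.carrier ∧ DI.depth B I = t}

noncomputable def levsum (t : ℕ) : ENNReal := setsum (level B K t)

lemma level_pairwise_disjoint (t : ℕ) :
    (level B K t).Pairwise (Function.onFun Disjoint DI.carrier) := by
  intro I1 h1 I2 h2 hne
  rw [Function.onFun]
  by_contra hd
  obtain ⟨x, hx1, hx2⟩ := Set.not_disjoint_iff.1 hd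
  rcases comparable hx1 hx2 with hs | hs
  · exact absurd (h1.2.2.trans h2.2.2.symm) (depth_lt h2.1 hs hne).ne'
  · exact absurd (h1.2.2.trans h2.2.2.symm) (depth_lt h1.1 hs (Ne.symm hne)).ne

lemma levsum_eq_volume (t : ℕ) :
    levsum B K t = volume (⋃ I ∈ level B K t, I.carrier) :=
  setsum_disjoint _ (level_pairwise_disjoint B K t)

variable {B K}

lemma levsum_succ_le (hK : K ∈ B) {t : ℕ} (ht : DI.depth B K ≤ t) :
    levsum B K (t + 1) ≤ levsum B K t := by
  rw [levsum_eq_volume, levsum_eq_volume]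
  apply measure_mono
  rintro x hx
  simp only [Set.mem_iUnion] at hx ⊢
  obtain ⟨I, hI, hxI⟩ := hx
  have hne : I ≠ K := by
    intro h
    subst h
    have h2 := hI.2.2
    omega
  have hd0 : DI.depth B I ≠ 0 := by
    have := depth_lt hK hI.2.1 hne
    omega
  obtain ⟨P, hPs, hmin, hdep⟩ := exists_parent hd0
  refine ⟨P, ⟨hPs.1, hmin K ⟨hK, hI.2.1, Ne.symm hne⟩, ?_⟩, hPs.2.1 hxI⟩
  have := hI.2.2
  omega

lemma levsum_mono (hK : K ∈ B) {s t : ℕ} (hs : DI.depth B K ≤ s) (hst : s ≤ t) :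
    levsum B K t ≤ levsum B K s := by
  induction t, hst using Nat.le_induction with
  | base => rfl
  | succ t hst ih => exact (levsum_succ_le hK (le_trans hs hst)).trans ih

lemma levsum_depth_le (hK : K ∈ B) : levsum B K (DI.depth B K) ≤ K.len := by
  have hsub : level B K (DI.depth B K) ⊆ {K} := by
    intro I hI
    simp only [Set.mem_singleton_iff]
    by_contra hne
    exact absurd hI.2.2 (depth_lt hK hI.2.1 hne).ne'
  calc setsum (level B K (DI.depth B K)) ≤ setsum {K} := setsum_mono hsub
  _ = K.len := by rw [setsum]; exact tsum_singleton K DI.len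

lemma levsum_total (hK : K ∈ B) : ∑' t : ℕ, levsum B K t = carlesonSum B K := by
  rw [carlesonSum_eq, setsum_partition {I | I ∈ B ∧ I.carrier ⊆ K.carrier} (DI.depth B)]
  apply tsum_congr
  intro t
  show setsum _ = setsum _
  congr 1
  ext I
  simp only [Set.mem_setOf_eq, level]
  tauto

end Core

section Cls
open DI

def cls (B : Set DI) (m j : ℕ) : Set DI := {I | I ∈ B ∧ DI.depth B I % m = j}

variable {B : Set DI} {m j : ℕ} {K : DI}

lemma cls_sum_le_at (hm : 0 < m) (hB : ∀ J : DI, carlesonSum B J ≤ m * J.len)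
    (hK : K ∈ cls B m j) : carlesonSum (cls B m j) K ≤ 2 * K.len := by
  have hKB : K ∈ B := hK.1
  set δ := DI.depth B K with hδ
  -- step 1 : partition the class sum by depth
  have step1 : carlesonSum (cls B m j) K ≤ ∑' k : ℕ, levsum B K (δ + k * m) := by
    rw [carlesonSum_eq,
      setsum_partition {I | I ∈ cls B m j ∧ I.carrier ⊆ K.carrier}
        (fun I => (DI.depth B I - δ) / m)]
    apply Summable.tsum_le_tsum ?_ ENNReal.summable ENNReal.summable
    intro k
    apply setsum_mono
    rintro I ⟨⟨⟨hIB, hImod⟩, hIsub⟩, hIk⟩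
    have hle : δ ≤ DI.depth B I := depth_le hKB hIsub
    have hmod : DI.depth B I % m = δ % m := by rw [hImod, hK.2]
    have hdvd : m ∣ (DI.depth B I - δ) := by
      exact Nat.dvd_of_mod_eq_zero (Nat.sub_mod_eq_zero_of_mod_eq hmod)
    have heq : DI.depth B I - δ = m * k := Nat.eq_mul_of_div_eq_right hdvd hIk
    rw [mul_comm] at heq
    exact ⟨hIB, hIsub, by omega⟩
  -- step 2 : peel off the first term
  rw [tsum_eq_zero_add' ENNReal.summable] at step1
  simp only [zero_mul, add_zero] at step1
  set T := ∑' k : ℕ, levsum B K (δ + (k + 1) * m) with hT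
  -- step 3 : m * T is dominated by the full Carleson sum
  have hmul : (m : ENNReal) * T ≤ (m : ENNReal) * K.len := by
    have inj1 : Function.Injective (fun p : ℕ × Fin m => p.1 * m + (p.2 : ℕ)) := by
      rintro ⟨q1, r1⟩ ⟨q2, r2⟩ hpq
      simp only at hpq
      have e1 : ((r1 : ℕ) + m * q1) / m = ((r2 : ℕ) + m * q2) / m := by
        rw [show (r1:ℕ) + m * q1 = q1 * m + r1 by ring, show (r2:ℕ) + m * q2 = q2 * m + r2 by ring, hpq]
      rw [Nat.add_mul_div_left _ _ hm, Nat.add_mul_div_left _ _ hm,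
        Nat.div_eq_of_lt r1.2, Nat.div_eq_of_lt r2.2] at e1
      have e2 : (r1 : ℕ) = r2 := by
        have g1 : ((r1:ℕ) + m * q1) % m = ((r2:ℕ) + m * q2) % m := by
          rw [show (r1:ℕ) + m * q1 = q1 * m + r1 by ring, show (r2:ℕ) + m * q2 = q2 * m + r2 by ring, hpq]
        rwa [Nat.add_mul_mod_self_left, Nat.add_mul_mod_self_left,
          Nat.mod_eq_of_lt r1.2, Nat.mod_eq_of_lt r2.2] at g1
      simp only [e1, Prod.mk.injEq, Fin.ext_iff, e2]
      exact ⟨by omega, trivial⟩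
    have h3a : (m : ENNReal) * T = ∑' p : ℕ × Fin m, levsum B K (δ + (p.1 + 1) * m) := by
      rw [ENNReal.tsum_prod']
      rw [hT, ← ENNReal.tsum_mul_left]
      apply tsum_congr
      intro q
      rw [tsum_fintype]
      simp [Finset.sum_const, Finset.card_univ, mul_comm]
    have h3b : ∑' p : ℕ × Fin m, levsum B K (δ + (p.1 + 1) * m)
        ≤ ∑' p : ℕ × Fin m, levsum B K (δ + (p.1 * m + (p.2:ℕ)) + 1) := by
      apply Summable.tsum_le_tsum ?_ ENNReal.summable ENNReal.summable
      rintro ⟨q, r⟩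
      simp only
      have hr := r.2
      have hx : (q + 1) * m = q * m + m := by ring
      exact levsum_mono hKB (by omega) (by omega)
    have h3c : ∑' p : ℕ × Fin m, levsum B K (δ + (p.1 * m + (p.2:ℕ)) + 1)
        ≤ ∑' d : ℕ, levsum B K (δ + d + 1) :=
      ENNReal.tsum_comp_le_tsum_of_injective inj1 (fun d => levsum B K (δ + d + 1))
    have h3d : ∑' d : ℕ, levsum B K (δ + d + 1) ≤ ∑' t : ℕ, levsum B K t :=
      ENNReal.tsum_comp_le_tsum_of_injective (fun a b hab => by omega) (levsum B K)
    have h3e : ∑' t : ℕ, levsum B K t ≤ (m : ENNReal) * K.len := by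
      rw [levsum_total hKB]
      exact hB K
    calc (m : ENNReal) * T = _ := h3a
      _ ≤ _ := h3b
      _ ≤ _ := h3c
      _ ≤ _ := h3d
      _ ≤ _ := h3e
  -- assemble
  have hm0 : (m : ENNReal) ≠ 0 := by exact_mod_cast hm.ne'
  have hmtop : (m : ENNReal) ≠ ⊤ := ENNReal.natCast_ne_top m
  rw [← ENNReal.mul_le_mul_iff_right hm0 hmtop]
  calc (m : ENNReal) * carlesonSum (cls B m j) K
      ≤ (m : ENNReal) * (levsum B K δ + T) := by exact mul_le_mul_right step1 _
    _ = (m : ENNReal) * levsum B K δ + (m : ENNReal) * T := by ring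
    _ ≤ (m : ENNReal) * K.len + (m : ENNReal) * K.len := by
        exact add_le_add (mul_le_mul_right (levsum_depth_le hKB) _) hmul
    _ = (m : ENNReal) * (2 * K.len) := by ring

end Cls

section MaxRed
open DI

variable {L : Set DI} {J : DI}

lemma exists_maxSet (hfin : ∀ I : DI, {K | K ∈ L ∧ I.carrier ⊆ K.carrier}.Finite := by
      exact fun I => (finite_anc I).subset fun K hK => hK.2)
    {I : DI} (hI : I ∈ L) : ∃ T ∈ maxSet L, I.carrier ⊆ T.carrier := by
  classical
  have hne : {K | K ∈ L ∧ I.carrier ⊆ K.carrier}.Nonempty := ⟨I, hI, subset_rfl⟩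
  obtain ⟨T, hTs, hmin⟩ := Set.exists_min_image _ (fun K => K.n) (hfin I) hne
  refine ⟨T, ⟨hTs.1, ?_⟩, hTs.2⟩
  intro K hK hTK
  have hKmem : K ∈ {K | K ∈ L ∧ I.carrier ⊆ K.carrier} := ⟨hK, hTs.2.trans hTK⟩
  obtain ⟨x, hx⟩ := carrier_nonempty T
  exact eq_of_same_n (le_antisymm (hmin K hKmem) (n_le_of_subset hTK)) hx (hTK hx)

lemma maxSet_pairwise (L : Set DI) :
    (maxSet L).Pairwise (Function.onFun Disjoint DI.carrier) := by
  intro T1 h1 T2 h2 hne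
  rw [Function.onFun]
  by_contra hd
  obtain ⟨x, hx1, hx2⟩ := Set.not_disjoint_iff.1 hd
  rcases comparable hx1 hx2 with hs | hs
  · exact hne (h1.2 T2 h2.1 hs)
  · exact hne (h2.2 T1 h1.1 hs).symm

/-- If the sum is controlled at every element of `L`, it is controlled everywhere. -/
lemma carlesonLE_of_self (c : ENNReal)
    (hc : ∀ K ∈ L, carlesonSum L K ≤ c * K.len) (J : DI) :
    carlesonSum L J ≤ c * J.len := by
  classical
  set U : Set DI := {I | I ∈ L ∧ I.carrier ⊆ J.carrier} with hU
  have hUL : carlesonSum L J = setsum U := rfl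
  set f : DI → DI := fun I =>
    if h : ∃ T ∈ maxSet U, I.carrier ⊆ T.carrier then h.choose else default with hf
  have hfspec : ∀ I ∈ U, f I ∈ maxSet U ∧ I.carrier ⊆ (f I).carrier := by
    intro I hI
    have hex : ∃ T ∈ maxSet U, I.carrier ⊆ T.carrier := exists_maxSet (L := U)
      (fun I => (finite_anc I).subset fun K hK => hK.2) hI
    simp only [hf, dif_pos hex]
    exact ⟨hex.choose_spec.1, hex.choose_spec.2⟩
  rw [hUL, setsum_partition U f]
  have hbound : ∀ b : DI, setsum {I | I ∈ U ∧ f I = b}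
      ≤ (maxSet U).indicator (fun b => c * b.len) b := by
    intro b
    by_cases hb : b ∈ maxSet U
    · rw [Set.indicator_of_mem hb]
      have hsub : {I | I ∈ U ∧ f I = b} ⊆ {I | I ∈ L ∧ I.carrier ⊆ b.carrier} := by
        rintro I ⟨hIU, rfl⟩
        exact ⟨hIU.1, (hfspec I hIU).2⟩
      calc setsum {I | I ∈ U ∧ f I = b} ≤ setsum {I | I ∈ L ∧ I.carrier ⊆ b.carrier} :=
            setsum_mono hsub
        _ = carlesonSum L b := rfl
        _ ≤ c * b.len := hc b hb.1.1
    · rw [Set.indicator_of_notMem hb]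
      have : {I | I ∈ U ∧ f I = b} = ∅ := by
        ext I
        simp only [Set.mem_setOf_eq, Set.mem_empty_iff_false, iff_false, not_and]
        rintro hIU rfl
        exact hb (hfspec I hIU).1
      rw [this, setsum_eq_indicator]
      simp
  calc ∑' b : DI, setsum {I | I ∈ U ∧ f I = b}
      ≤ ∑' b : DI, (maxSet U).indicator (fun b => c * b.len) b :=
        Summable.tsum_le_tsum hbound ENNReal.summable ENNReal.summable
    _ = ∑' b : DI, c * (maxSet U).indicator DI.len b := by
        apply tsum_congr
        intro b
        by_cases hb : b ∈ maxSet U <;>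
          simp [Set.indicator_of_mem, Set.indicator_of_notMem, hb]
    _ = c * setsum (maxSet U) := by rw [ENNReal.tsum_mul_left, ← setsum_eq_indicator]
    _ ≤ c * J.len := by
        apply mul_le_mul_right
        rw [setsum_disjoint _ (maxSet_pairwise U), ← DI.volume_carrier J]
        apply measure_mono
        apply Set.iUnion₂_subset
        intro T hT
        exact hT.1.2

end MaxRed

section Main
open DI

variable {L : Set DI}

lemma setsum_empty' : setsum (∅ : Set DI) = 0 := by
  rw [setsum_eq_indicator]; simp

lemma carlesonSum_le_const (L : Set DI) (J : DI) :
    carlesonSum L J ≤ carlesonConst L * J.len := by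
  have h := le_iSup (fun J => carlesonSum L J / J.len) J
  calc carlesonSum L J = carlesonSum L J / J.len * J.len :=
        (ENNReal.div_mul_cancel (DI.len_ne_zero J) (DI.len_ne_top J)).symm
    _ ≤ carlesonConst L * J.len := mul_le_mul_left h _

lemma carlesonConst_le {M : ENNReal} (h : ∀ J : DI, carlesonSum L J ≤ M * J.len) :
    carlesonConst L ≤ M :=
  iSup_le fun J => ENNReal.div_le_of_le_mul (h J)

lemma setsum_union_le (A B' : Set DI) : setsum (A ∪ B') ≤ setsum A + setsum B' := by
  rw [setsum_eq_indicator, setsum_eq_indicator, setsum_eq_indicator, ← ENNReal.tsum_add]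
  apply Summable.tsum_le_tsum ?_ ENNReal.summable ENNReal.summable
  intro I
  by_cases hA : I ∈ A <;> by_cases hB : I ∈ B' <;>
    simp [Set.indicator_apply, hA, hB]

lemma carlesonSum_union_le (A B' : Set DI) (J : DI) :
    carlesonSum (A ∪ B') J ≤ carlesonSum A J + carlesonSum B' J := by
  rw [carlesonSum_eq, carlesonSum_eq, carlesonSum_eq]
  have : {I | I ∈ A ∪ B' ∧ I.carrier ⊆ J.carrier}
      = {I | I ∈ A ∧ I.carrier ⊆ J.carrier} ∪ {I | I ∈ B' ∧ I.carrier ⊆ J.carrier} := by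
    ext I
    simp only [Set.mem_setOf_eq, Set.mem_union]
    tauto
  rw [this]
  exact setsum_union_le _ _

lemma carlesonSum_biUnion_le (s : Finset ℕ) (S : ℕ → Set DI) (J : DI) :
    carlesonSum (⋃ j ∈ s, S j) J ≤ ∑ j ∈ s, carlesonSum (S j) J := by
  classical
  induction s using Finset.induction with
  | empty =>
      simp only [Finset.notMem_empty, Set.iUnion_of_empty, Set.iUnion_empty, Finset.sum_empty]
      rw [carlesonSum_eq]
      have : {I | I ∈ (∅ : Set DI) ∧ I.carrier ⊆ J.carrier} = ∅ := by simp
      rw [this, setsum_empty']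
  | @insert a s ha ih =>
      rw [Finset.set_biUnion_insert, Finset.sum_insert ha]
      exact (carlesonSum_union_le _ _ J).trans (add_le_add_right ih _)

lemma carlesonConst_biUnion_le (s : Finset ℕ) (S : ℕ → Set DI) :
    carlesonConst (⋃ j ∈ s, S j) ≤ ∑ j ∈ s, carlesonConst (S j) := by
  apply iSup_le
  intro J
  calc carlesonSum (⋃ j ∈ s, S j) J / J.len
      ≤ (∑ j ∈ s, carlesonSum (S j) J) / J.len :=
        ENNReal.div_le_div_right (carlesonSum_biUnion_le s S J) _
    _ = ∑ j ∈ s, carlesonSum (S j) J / J.len := by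
        simp only [div_eq_mul_inv, Finset.sum_mul]
    _ ≤ ∑ j ∈ s, carlesonConst (S j) :=
        Finset.sum_le_sum fun j _ => le_iSup (fun J => carlesonSum (S j) J / J.len) J

lemma one_le_carlesonConst (hne : L.Nonempty) : 1 ≤ carlesonConst L := by
  obtain ⟨I, hI⟩ := hne
  have h1 : I.len ≤ carlesonSum L I := by
    rw [carlesonSum_eq]
    have hsub : ({I} : Set DI) ⊆ {I' | I' ∈ L ∧ I'.carrier ⊆ I.carrier} :=
      Set.singleton_subset_iff.2 ⟨hI, subset_rfl⟩
    have : setsum ({I} : Set DI) = I.len := tsum_singleton I DI.len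
    rw [← this]
    exact setsum_mono hsub
  calc (1:ENNReal) = I.len / I.len := (ENNReal.div_self (DI.len_ne_zero I) (DI.len_ne_top I)).symm
    _ ≤ carlesonSum L I / I.len := ENNReal.div_le_div_right h1 _
    _ ≤ carlesonConst L := le_iSup (fun J => carlesonSum L J / J.len) I

lemma carlesonConst_empty : carlesonConst (∅ : Set DI) = 0 := by
  apply le_antisymm ?_ zero_le
  apply iSup_le
  intro J
  have : {I | I ∈ (∅ : Set DI) ∧ I.carrier ⊆ J.carrier} = ∅ := by simp
  rw [carlesonSum_eq, this, setsum_empty']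
  simp

end Main

/-- Upgrading a quadratic Carleson bound to a linear one:
if `⟦τ(B)⟧ ≤ C ⟦B⟧²` for all `B`, then `⟦τ(B)⟧ ≤ 16C ⟦B⟧` for all `B`. -/
theorem stmt15 (τ : DI → DI) (hτ : Function.Injective τ) (C : ENNReal) (hC : 1 ≤ C)
    (h : ∀ B : Set DI, carlesonConst (τ '' B) ≤ C * carlesonConst B ^ 2)
    (B : Set DI) :
    carlesonConst (τ '' B) ≤ 16 * C * carlesonConst B := by
  classical
  rcases Set.eq_empty_or_nonempty B with rfl | hne
  · rw [Set.image_empty, carlesonConst_empty]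
    exact zero_le
  set M := carlesonConst B with hM
  by_cases htop : M = ⊤
  · have hC0 : (16 : ENNReal) * C ≠ 0 := by
      intro h0
      rcases mul_eq_zero.1 h0 with h16 | hC'
      · norm_num at h16
      · rw [hC'] at hC; exact absurd hC (by norm_num)
    rw [htop, ENNReal.mul_top hC0]
    exact le_top
  have h1M : 1 ≤ M := one_le_carlesonConst hne
  have h1Mr : 1 ≤ M.toReal := by
    rw [show (1:ℝ) = (1:ENNReal).toReal by simp]
    exact ENNReal.toReal_mono htop h1M
  set m : ℕ := ⌈M.toReal⌉₊ with hm
  have hm1 : 0 < m := by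
    rw [hm]
    exact Nat.one_le_ceil_iff.2 (by linarith)
  have hMm : M ≤ (m : ENNReal) := by
    rw [← ENNReal.ofReal_toReal htop, ← ENNReal.ofReal_natCast]
    exact ENNReal.ofReal_le_ofReal (Nat.le_ceil _)
  have hmM : (m : ENNReal) ≤ 2 * M := by
    have h1 : (m : ℝ) ≤ M.toReal + 1 := le_of_lt (Nat.ceil_lt_add_one (by linarith))
    have : (m : ENNReal) ≤ M + 1 := by
      have h2 := ENNReal.ofReal_le_ofReal h1
      rw [ENNReal.ofReal_natCast] at h2
      rwa [ENNReal.ofReal_add (by linarith) zero_le_one, ENNReal.ofReal_toReal htop,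
        ENNReal.ofReal_one] at h2
    calc (m : ENNReal) ≤ M + 1 := this
      _ ≤ M + M := add_le_add_right h1M M
      _ = 2 * M := (two_mul M).symm
  -- the decomposition
  have hBsum : ∀ J : DI, carlesonSum B J ≤ (m : ENNReal) * J.len := fun J =>
    (carlesonSum_le_const B J).trans (mul_le_mul_left hMm _)
  have hcover : B = ⋃ j ∈ Finset.range m, cls B m j := by
    ext I
    simp only [Set.mem_iUnion, Finset.mem_range]
    constructor
    · intro hI
      exact ⟨DI.depth B I % m, Nat.mod_lt _ hm1, hI, rfl⟩
    · rintro ⟨j, _, hI, _⟩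
      exact hI
  have hcls : ∀ j, carlesonConst (τ '' cls B m j) ≤ C * 4 := by
    intro j
    refine (h _).trans ?_
    apply mul_le_mul_right
    have h2 : carlesonConst (cls B m j) ≤ 2 :=
      carlesonConst_le (carlesonLE_of_self 2 (fun K hK => cls_sum_le_at hm1 hBsum hK))
    calc carlesonConst (cls B m j) ^ 2 ≤ 2 ^ 2 := by gcongr
      _ = (4 : ENNReal) := by norm_num
  calc carlesonConst (τ '' B)
      = carlesonConst (⋃ j ∈ Finset.range m, τ '' cls B m j) := by
        rw [← Set.image_iUnion₂, ← hcover]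
    _ ≤ ∑ j ∈ Finset.range m, carlesonConst (τ '' cls B m j) :=
        carlesonConst_biUnion_le _ _
    _ ≤ ∑ _j ∈ Finset.range m, C * 4 := Finset.sum_le_sum fun j _ => hcls j
    _ = (m : ENNReal) * (C * 4) := by
        rw [Finset.sum_const, Finset.card_range, nsmul_eq_mul]
    _ ≤ (2 * M) * (C * 4) := mul_le_mul_left hmM _
    _ = 8 * C * M := by ring
    _ ≤ 16 * C * M := mul_le_mul_left (mul_le_mul_left (by norm_num) C) M
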